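/- If the two reneging rates coincide, θ1 = θ2 = θ, then the expected queue length is related to the queueing probability by the exact identity L = (λ/θ)·[ p·(P_Q − π_s) + π_s − π_{s+n1+n2} ], where p = 1 − s·μ/λ. (Equation (10) of Corollary 1.) -/

import Mathlib

open Finset

/-- Departure rate of the two-stage reneging birth-death chain. -/
noncomputable def depRate (s n1 : ℕ) (μ θ1 θ2 : ℝ) (k : ℕ) : ℝ :=
  if k ≤ s then (k : ℝ) * μ
  else if k ≤ s + n1 then (s : ℝ) * μ + ((k : ℝ) - (s : ℝ)) * θ1
  else (s : ℝ) * μ + (n1 : ℝ) * θ1 + ((k : ℝ) - (s : ℝ) - (n1 : ℝ)) * θ2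

/-- Stationary probability of state `k` in the subchain with state set `A`. -/
noncomputable def subProb (π : ℕ → ℝ) (A : Finset ℕ) (k : ℕ) : ℝ :=
  π k / ∑ k' ∈ A, π k'

lemma aux_telescope (s : ℕ) (c θ lam : ℝ) (π : ℕ → ℝ) (m : ℕ)
    (hbal : ∀ k, s + 1 ≤ k → k ≤ s + m →
      π k * (c + ((k : ℝ) - (s : ℝ)) * θ) = π (k - 1) * lam) :
    θ * ∑ k ∈ Icc s (s + m), ((k - s : ℕ) : ℝ) * π k
      = lam * ((∑ k ∈ Icc s (s + m), π k) - π (s + m))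
        - c * ((∑ k ∈ Icc s (s + m), π k) - π s) := by
  induction m with
  | zero => simp
  | succ m ih =>
    have ih' := ih (fun k h1 h2 => hbal k h1 (by omega))
    have hb := hbal (s + m + 1) (by omega) (by omega)
    have h1 : s + (m + 1) = (s + m) + 1 := by omega
    have h2 : (s + m + 1) - 1 = s + m := by omega
    have h3 : ((s + m + 1 - s : ℕ) : ℝ) = (m : ℝ) + 1 := by
      rw [show s + m + 1 - s = m + 1 from by omega]; push_cast; ring
    rw [h1, Finset.sum_Icc_succ_top (by omega : s ≤ s + m + 1),
        Finset.sum_Icc_succ_top (by omega : s ≤ s + m + 1)]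
    rw [h2] at hb
    have h4 : ((s + m + 1 : ℕ) : ℝ) - (s : ℝ) = (m : ℝ) + 1 := by push_cast; ring
    rw [h4] at hb
    rw [h3]
    nlinarith [ih', hb]

theorem stmt_8 (lam μ θ1 θ2 : ℝ) (hlam : 0 < lam) (hμ : 0 < μ)
    (hθ1 : 0 < θ1) (hθ2 : 0 < θ2) (s n1 n2 : ℕ) (hs : 1 ≤ s) (π : ℕ → ℝ)
    (hpos : ∀ k ∈ Finset.Icc 0 (s + n1 + n2), 0 < π k)
    (hbal : ∀ k, 1 ≤ k → k ≤ s + n1 + n2 →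
      π k * depRate s n1 μ θ1 θ2 k = π (k - 1) * lam)
    (hsum : ∑ k ∈ Finset.Icc 0 (s + n1 + n2), π k = 1)
    (θ : ℝ) (hθa : θ1 = θ) (hθb : θ2 = θ) :
    (∑ k ∈ Finset.Icc 0 (s + n1 + n2), ((k - s : ℕ) : ℝ) * π k) = lam / θ * ((1 - (s : ℝ) * μ / lam) * ((∑ k ∈ Finset.Icc s (s + n1 + n2), π k) - π s) + π s - π (s + n1 + n2)) := by
  have h21 : θ2 = θ1 := by rw [hθa, hθb]
  rw [← hθa]
  rw [h21] at hbal
  have hθ : (0:ℝ) < θ1 := hθ1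
  -- restrict the sum on the left to Icc s (s+n1+n2)
  have hsub : Finset.Icc s (s + n1 + n2) ⊆ Finset.Icc 0 (s + n1 + n2) := by
    intro k hk; simp at hk ⊢; omega
  have hL : (∑ k ∈ Finset.Icc 0 (s + n1 + n2), ((k - s : ℕ) : ℝ) * π k)
      = ∑ k ∈ Finset.Icc s (s + n1 + n2), ((k - s : ℕ) : ℝ) * π k := by
    refine (Finset.sum_subset hsub ?_).symm
    intro k hk hk'
    simp at hk hk'
    have : k - s = 0 := by omega
    simp [this]
  -- balance equations in the simplified form
  have hbal' : ∀ k, s + 1 ≤ k → k ≤ s + (n1 + n2) →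
      π k * ((s : ℝ) * μ + ((k : ℝ) - (s : ℝ)) * θ1) = π (k - 1) * lam := by
    intro k h1 h2
    have := hbal k (by omega) (by omega)
    unfold depRate at this
    rw [if_neg (by omega)] at this
    by_cases hc : k ≤ s + n1
    · rwa [if_pos hc] at this
    · rw [if_neg hc] at this
      convert this using 2
      ring
  have key := aux_telescope s ((s : ℝ) * μ) θ1 lam π (n1 + n2) hbal'
  have hN : s + (n1 + n2) = s + n1 + n2 := by omega
  rw [hN] at key
  rw [hL]
  have hlam' : lam ≠ 0 := ne_of_gt hlam
  have hθ' : θ1 ≠ 0 := ne_of_gt hθ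
  field_simp
  linear_combination key
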